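/- The derivative of Gallager's source function satisfies E_s'(ρ) = -∑_v p_{1/(1+ρ)}(v) log p_{1/(1+ρ)}(v), i.e., the derivative of E_s at ρ equals the Shannon entropy of the tilted distribution p_{1/(1+ρ)}, where p_σ(v) = p(v)^σ / ∑_{w} p(w)^σ. -/

import Mathlib

/-- The derivative of Gallager's source function at `ρ` equals the Shannon entropy of the
tilted distribution `p_{1/(1+ρ)}`, where `p_σ(v) = p(v)^σ / ∑_w p(w)^σ`. -/
theorem Es_deriv {V : Type*} [Fintype V] [Nonempty V] (p : V → ℝ)
    (hpos : ∀ v, 0 < p v) (hsum : ∑ v, p v = 1) (ρ : ℝ) (hρ : 0 ≤ ρ) :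
    HasDerivAt (fun ρ : ℝ => (1 + ρ) * Real.log (∑ v, p v ^ ((1 : ℝ) / (1 + ρ))))
      (-∑ v, (p v ^ ((1 : ℝ) / (1 + ρ)) / ∑ w, p w ^ ((1 : ℝ) / (1 + ρ))) *
          Real.log (p v ^ ((1 : ℝ) / (1 + ρ)) / ∑ w, p w ^ ((1 : ℝ) / (1 + ρ))))
      ρ := by
  have h1 : (0:ℝ) < 1 + ρ := by linarith
  set σ : ℝ := 1 / (1 + ρ) with hσ
  have hS : 0 < ∑ v, p v ^ σ :=
    Finset.sum_pos (fun v _ => Real.rpow_pos_of_pos (hpos v) σ) Finset.univ_nonempty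
  have hf : HasDerivAt (fun x : ℝ => (1:ℝ) / (1 + x)) (-(1 / (1 + ρ) ^ 2)) ρ := by
    have h : HasDerivAt (fun x : ℝ => 1 + x) 1 ρ := (hasDerivAt_id ρ).const_add 1
    simpa [one_div, neg_div] using h.fun_inv h1.ne'
  have hterm : ∀ v : V, HasDerivAt (fun x : ℝ => p v ^ ((1:ℝ) / (1 + x)))
      (p v ^ σ * Real.log (p v) * (-(1 / (1 + ρ) ^ 2))) ρ := fun v => by
    simpa [Function.comp_def] using
      ((Real.hasStrictDerivAt_const_rpow (hpos v) σ).hasDerivAt.comp ρ hf)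
  have hSder : HasDerivAt (fun x : ℝ => ∑ v, p v ^ ((1:ℝ) / (1 + x)))
      (∑ v, p v ^ σ * Real.log (p v) * (-(1 / (1 + ρ) ^ 2))) ρ :=
    HasDerivAt.fun_sum fun v _ => hterm v
  have hlog := hSder.log hS.ne'
  have hmul : HasDerivAt (fun x : ℝ => (1 + x) * Real.log (∑ v, p v ^ ((1:ℝ) / (1 + x))))
      (1 * Real.log (∑ v, p v ^ σ) +
        (1 + ρ) * ((∑ v, p v ^ σ * Real.log (p v) * (-(1 / (1 + ρ) ^ 2))) / (∑ v, p v ^ σ)))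
      ρ := ((hasDerivAt_id ρ).const_add 1).mul hlog
  convert hmul using 1
  have hlogq : ∀ v : V,
      (p v ^ σ / ∑ w, p w ^ σ) * Real.log (p v ^ σ / ∑ w, p w ^ σ)
        = (σ * (p v ^ σ * Real.log (p v)) - Real.log (∑ w, p w ^ σ) * p v ^ σ)
            / ∑ w, p w ^ σ := by
    intro v
    rw [Real.log_div (Real.rpow_pos_of_pos (hpos v) σ).ne' hS.ne',
      Real.log_rpow (hpos v)]
    field_simp
  rw [Finset.sum_congr rfl fun v _ => hlogq v, ← Finset.sum_div, Finset.sum_sub_distrib,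
    ← Finset.mul_sum, ← Finset.mul_sum, ← Finset.sum_mul]
  rw [hσ]
  have hS2 : (∑ v, p v ^ ((1:ℝ) / (1 + ρ))) ≠ 0 := by rw [← hσ]; exact hS.ne'
  field_simp
  ring
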